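/- Absolute convergence of the kernel series R_{s;k,N,ψ}: let N ≥ 1 and k ≥ 3 be integers, let z ∈ ℍ, and let s be a complex number with 1 < Re(s) < k/2 − 3/4. Let S = {(c, d) ∈ ℤ² : gcd(c, d) = 1 and 4N ∣ c}, and for each (c, d) ∈ S fix integers a(c,d), b(c,d) with a(c,d)·d − b(c,d)·c = 1 and set w(c,d) := (a(c,d)·z + b(c,d))/(cz + d) ∈ ℍ. Then the family ((c,d), n) ↦ (cz + d)^{-(k+1/2)} · (w(c,d) + n)^{-s}, indexed by (c,d) ∈ S and n ∈ ℤ, is absolutely summable. -/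

import Mathlib

open Complex Real

lemma aux_norm_cpow_le (v u : ℂ) :
    ‖v ^ u‖ ≤ ‖v‖ ^ u.re * Real.exp (Real.pi * |u.im|) := by
  refine (Complex.norm_cpow_le v u).trans ?_
  rw [div_eq_mul_inv, ← Real.exp_neg]
  have h : -(v.arg * u.im) ≤ Real.pi * |u.im| := by
    refine (neg_le_abs _).trans ?_
    rw [abs_mul]
    exact mul_le_mul_of_nonneg_right (Complex.abs_arg_le_pi v) (abs_nonneg _)
  exact mul_le_mul_of_nonneg_left (Real.exp_le_exp.mpr h)
    (Real.rpow_nonneg (norm_nonneg v) _)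

def aux_shiftEquiv {α : Type*} (g : α → ℤ) : α × ℤ ≃ α × ℤ where
  toFun q := (q.1, q.2 - g q.1)
  invFun q := (q.1, q.2 + g q.1)
  left_inv q := by simp
  right_inv q := by simp

lemma aux_outer (z : UpperHalfPlane) {β : ℝ} (hβ : 2 < β) {ι : Type*} (f : ι → ℤ × ℤ)
    (hf : Function.Injective f) :
    Summable fun p : ι => ‖((f p).1 : ℂ) * (z : ℂ) + ((f p).2 : ℂ)‖ ^ (-β) := by
  have h0 : Summable fun x : Fin 2 → ℤ =>
      EisensteinSeries.r z ^ (-β) * ‖x‖ ^ (-β) :=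
    (EisensteinSeries.summable_one_div_norm_rpow hβ).mul_left _
  have hinj : Function.Injective (fun p : ι => (![(f p).1, (f p).2] : Fin 2 → ℤ)) := by
    intro p q h
    apply hf
    have h0 := congrFun h 0
    have h1 := congrFun h 1
    simp only [Matrix.cons_val_zero, Matrix.cons_val_one, Matrix.head_cons] at h0 h1
    exact Prod.ext h0 h1
  have h1 : Summable (fun p : ι =>
      EisensteinSeries.r z ^ (-β) * ‖(![(f p).1, (f p).2] : Fin 2 → ℤ)‖ ^ (-β)) :=
    h0.comp_injective hinj
  refine Summable.of_nonneg_of_le (fun p => Real.rpow_nonneg (norm_nonneg _) _)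
    (fun p => ?_) h1
  have := EisensteinSeries.summand_bound z (by linarith : (0:ℝ) ≤ β) ![(f p).1, (f p).2]
  simpa only [Matrix.cons_val_zero, Matrix.cons_val_one, Matrix.head_cons] using this

lemma aux_ne_zero (z : UpperHalfPlane) {c d : ℤ} (h : IsCoprime c d) :
    ((c : ℂ) * (z : ℂ) + (d : ℂ)) ≠ 0 := by
  intro hcd
  have him : (c : ℝ) * z.im = 0 := by
    have := congrArg Complex.im hcd
    simpa [Complex.add_im, Complex.mul_im, UpperHalfPlane.coe_im, UpperHalfPlane.coe_re] using this
  have hc : (c : ℝ) = 0 := by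
    rcases mul_eq_zero.mp him with h' | h'
    · exact h'
    · exact absurd h' z.im_ne_zero
  have hc' : c = 0 := by exact_mod_cast hc
  have hd : (d : ℝ) = 0 := by
    have := congrArg Complex.re hcd
    simpa [Complex.add_re, Complex.mul_re, hc, UpperHalfPlane.coe_im, UpperHalfPlane.coe_re]
      using this
  have hd' : d = 0 := by exact_mod_cast hd
  rw [hc', hd'] at h
  exact not_isCoprime_zero_zero h

lemma aux_im (z : UpperHalfPlane) {a b c d : ℤ} (h : a * d - b * c = 1) :
    (((a : ℂ) * (z : ℂ) + b) / ((c : ℂ) * (z : ℂ) + d)).im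
      = z.im / ‖(c : ℂ) * (z : ℂ) + d‖ ^ 2 := by
  rw [Complex.div_im, Complex.sq_norm, div_sub_div_same]
  congr 1
  have h' : (a : ℝ) * d - (b : ℝ) * c = 1 := by exact_mod_cast h
  simp only [Complex.add_im, Complex.add_re, Complex.mul_im, Complex.mul_re,
    Complex.intCast_re, Complex.intCast_im, UpperHalfPlane.coe_im, UpperHalfPlane.coe_re]
  ring_nf
  linear_combination z.im * h'

/-- Absolute convergence of the kernel series `R_{s;k,N,ψ}`: for `N ≥ 1`,
`k ≥ 3`, `z ∈ ℍ` and `1 < Re s < k/2 − 3/4`, the family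
`((c,d), n) ↦ (cz + d)^{-(k+1/2)} · (w(c,d) + n)^{-s}`, indexed by coprime
pairs `(c, d)` with `4N ∣ c` and `n ∈ ℤ`, where
`w(c,d) = (a(c,d)z + b(c,d))/(cz + d)` for a fixed choice of integers with
`a(c,d)·d − b(c,d)·c = 1`, is absolutely summable. -/
theorem summable_kernel_series (N k : ℤ) (hN : 1 ≤ N) (hk : 3 ≤ k)
    (z : UpperHalfPlane) (s : ℂ) (hs1 : 1 < s.re) (hs2 : s.re < (k : ℝ) / 2 - 3 / 4)
    (a b : {p : ℤ × ℤ // IsCoprime p.1 p.2 ∧ (4 * N) ∣ p.1} → ℤ)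
    (hab : ∀ p : {p : ℤ × ℤ // IsCoprime p.1 p.2 ∧ (4 * N) ∣ p.1},
      a p * p.1.2 - b p * p.1.1 = 1) :
    Summable (fun q : {p : ℤ × ℤ // IsCoprime p.1 p.2 ∧ (4 * N) ∣ p.1} × ℤ =>
      ‖((q.1.1.1 : ℂ) * z + q.1.1.2) ^ (-((k : ℂ) + 1 / 2)) *
        (((a q.1 : ℂ) * z + b q.1) / ((q.1.1.1 : ℂ) * z + q.1.1.2) + q.2) ^ (-s)‖) := by
  set y : ℝ := z.im with hydef
  have hy : 0 < y := z.im_pos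
  set σ : ℝ := s.re with hσdef
  set κ : ℝ := (k : ℝ) + 1 / 2 with hκdef
  have hκ2 : 2 < κ := by
    have h3 : (3:ℝ) ≤ (k:ℝ) := by exact_mod_cast hk
    rw [hκdef]; linarith
  have hβ2 : 2 < κ - 2 * σ := by
    rw [hκdef, hσdef]; linarith [hs2]
  have hσ1 : 1 < σ := hs1
  set D : {p : ℤ × ℤ // IsCoprime p.1 p.2 ∧ (4 * N) ∣ p.1} → ℂ :=
    fun p => (p.1.1 : ℂ) * z + p.1.2 with hDdef
  have hD0 : ∀ p, D p ≠ 0 := fun p => aux_ne_zero z p.2.1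
  have hDpos : ∀ p, 0 < ‖D p‖ := fun p => norm_pos_iff.mpr (hD0 p)
  set w : {p : ℤ × ℤ // IsCoprime p.1 p.2 ∧ (4 * N) ∣ p.1} → ℂ :=
    fun p => ((a p : ℂ) * z + b p) / D p with hwdef
  have hwim : ∀ p, (w p).im = y / ‖D p‖ ^ 2 := fun p => aux_im z (hab p)
  set n₀ : {p : ℤ × ℤ // IsCoprime p.1 p.2 ∧ (4 * N) ∣ p.1} → ℤ :=
    fun p => round ((w p).re) with hn₀
  set E : ℝ := Real.exp (Real.pi * |s.im|) with hE
  have hE0 : 0 < E := Real.exp_pos _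
  have hZsum : Summable fun j : ℤ => |(j : ℝ)| ^ (-σ) := Real.summable_abs_int_rpow hσ1
  set Z : ℝ := ∑' j : ℤ, |(j : ℝ)| ^ (-σ) with hZdef
  set G : {p : ℤ × ℤ // IsCoprime p.1 p.2 ∧ (4 * N) ∣ p.1} × ℤ → ℝ := fun q =>
    E * ‖D q.1‖ ^ (-κ) *
      ((if q.2 = 0 then (y / ‖D q.1‖ ^ 2) ^ (-σ) else 0)
        + 2 ^ σ * |(q.2 : ℝ)| ^ (-σ)) with hG
  have hind : ∀ C : ℝ, Summable fun j : ℤ => (if j = 0 then C else 0) := fun C =>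
    summable_of_ne_finset_zero (s := {(0:ℤ)}) (fun j hj => if_neg (by simpa using hj))
  have key : ∀ (p : {p : ℤ × ℤ // IsCoprime p.1 p.2 ∧ (4 * N) ∣ p.1}) (j : ℤ),
      ‖D p ^ (-((k:ℂ) + 1/2)) * (w p + ((j - n₀ p : ℤ) : ℂ)) ^ (-s)‖ ≤ G (p, j) := by
    intro p j
    set v : ℂ := w p + ((j - n₀ p : ℤ) : ℂ) with hv
    have hDp := hDpos p
    have hvim : v.im = y / ‖D p‖ ^ 2 := by
      rw [hv, Complex.add_im, Complex.intCast_im, add_zero, hwim p]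
    have hvim0 : 0 < v.im := by rw [hvim]; positivity
    have hvabs : 0 < ‖v‖ := by
      apply norm_pos_iff.mpr
      intro h0
      rw [h0, Complex.zero_im] at hvim0
      exact lt_irrefl 0 hvim0
    have h1 : ‖D p ^ (-((k:ℂ) + 1/2))‖ ≤ ‖D p‖ ^ (-κ) := by
      have hexp : -((k:ℂ) + 1/2) = ((-κ : ℝ) : ℂ) := by
        rw [hκdef]; push_cast; ring
      rw [hexp]
      have h := aux_norm_cpow_le (D p) ((-κ : ℝ) : ℂ)
      simpa using h
    have h2 : ‖v ^ (-s)‖ ≤ ‖v‖ ^ (-σ) * E := by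
      have h := aux_norm_cpow_le v (-s)
      simpa only [Complex.neg_re, Complex.neg_im, abs_neg, hE, hσdef] using h
    rw [norm_mul]
    have hmul : ‖D p ^ (-((k:ℂ)+1/2))‖ * ‖v ^ (-s)‖ ≤
        ‖D p‖ ^ (-κ) * (‖v‖ ^ (-σ) * E) :=
      mul_le_mul h1 h2 (norm_nonneg _) (Real.rpow_nonneg (norm_nonneg _) _)
    refine hmul.trans ?_
    rcases eq_or_ne j 0 with hj | hj
    · subst hj
      have hb : ‖v‖ ^ (-σ) ≤ (y / ‖D p‖ ^ 2) ^ (-σ) := by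
        refine Real.rpow_le_rpow_of_nonpos (div_pos hy (by positivity)) ?_ (by linarith)
        calc y / ‖D p‖ ^ 2 = v.im := hvim.symm
          _ ≤ ‖v‖ := Complex.im_le_norm v
      calc ‖D p‖ ^ (-κ) * (‖v‖ ^ (-σ) * E)
          ≤ ‖D p‖ ^ (-κ) * ((y / ‖D p‖ ^ 2) ^ (-σ) * E) := by
            gcongr
        _ = G (p, 0) := by
            simp only [hG, if_pos, Int.cast_zero, abs_zero,
              Real.zero_rpow (show (-σ) ≠ 0 by linarith), mul_zero, add_zero]
            ring
    · have hj1 : (1:ℝ) ≤ |(j:ℝ)| := by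
        rw [← Int.cast_abs]
        exact_mod_cast Int.one_le_abs hj
      have hvre : v.re = ((w p).re - (n₀ p : ℝ)) + (j : ℝ) := by
        rw [hv, Complex.add_re, Complex.intCast_re]
        push_cast
        ring
      have habs : |(j:ℝ)| / 2 ≤ ‖v‖ := by
        have h12 : |(w p).re - (n₀ p : ℝ)| ≤ 1/2 := by
          simpa [hn₀] using abs_sub_round ((w p).re)
        have heq : |(j:ℝ)| = |v.re - ((w p).re - (n₀ p : ℝ))| := by
          rw [hvre]; ring_nf
        have habs' : |v.re - ((w p).re - (n₀ p : ℝ))| ≤ |v.re| + |(w p).re - (n₀ p : ℝ)| := by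
          rw [sub_eq_add_neg]
          exact (abs_add_le _ _).trans (by rw [abs_neg])
        have h4 : |v.re| ≤ ‖v‖ := Complex.abs_re_le_norm v
        have h5 : |(j:ℝ)| ≤ ‖v‖ + 1/2 := by
          rw [heq]
          linarith
        linarith
      have hb : ‖v‖ ^ (-σ) ≤ 2 ^ σ * |(j:ℝ)| ^ (-σ) := by
        have h4 : ‖v‖ ^ (-σ) ≤ (|(j:ℝ)| / 2) ^ (-σ) :=
          Real.rpow_le_rpow_of_nonpos (by linarith) habs (by linarith)
        refine h4.trans_eq ?_
        rw [Real.div_rpow (abs_nonneg _) (by norm_num : (0:ℝ) ≤ 2),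
          show ((2:ℝ)) ^ (-σ) = (((2:ℝ) ^ σ))⁻¹ from Real.rpow_neg (by norm_num) σ,
          div_eq_mul_inv, inv_inv, mul_comm]
      calc ‖D p‖ ^ (-κ) * (‖v‖ ^ (-σ) * E)
          ≤ ‖D p‖ ^ (-κ) * ((2 ^ σ * |(j:ℝ)| ^ (-σ)) * E) := by gcongr
        _ = G (p, j) := by
            simp only [hG, if_neg hj]
            ring
  have hGnn : ∀ q, 0 ≤ G q := by
    intro q
    simp only [hG]
    have h1 : (0:ℝ) ≤ (if q.2 = 0 then (y / ‖D q.1‖ ^ 2) ^ (-σ) else 0) := by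
      split
      · positivity
      · exact le_refl 0
    refine mul_nonneg (mul_nonneg hE0.le (Real.rpow_nonneg (norm_nonneg _) _)) ?_
    exact add_nonneg h1 (mul_nonneg (Real.rpow_nonneg (by norm_num) _)
      (Real.rpow_nonneg (abs_nonneg _) _))
  have hGsum : Summable G := by
    rw [summable_prod_of_nonneg hGnn]
    constructor
    · intro p
      simp only [hG]
      exact Summable.mul_left _ ((hind _).add (hZsum.mul_left _))
    · have htsum : ∀ p, (∑' j : ℤ, G (p, j))
          = E * ‖D p‖ ^ (-κ) * ((y / ‖D p‖ ^ 2) ^ (-σ) + 2 ^ σ * Z) := by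
        intro p
        simp only [hG]
        rw [tsum_mul_left, Summable.tsum_add (hind _) (hZsum.mul_left _), tsum_ite_eq, tsum_mul_left]
      refine Summable.congr ?_ (fun p => (htsum p).symm)
      have hsum1 : Summable fun p : {p : ℤ × ℤ // IsCoprime p.1 p.2 ∧ (4 * N) ∣ p.1} =>
          ‖D p‖ ^ (-(κ - 2*σ)) := by
        have h := aux_outer z hβ2 (ι := {p : ℤ × ℤ // IsCoprime p.1 p.2 ∧ (4 * N) ∣ p.1})
          (f := Subtype.val) Subtype.val_injective
        exact h
      have hsum2 : Summable fun p : {p : ℤ × ℤ // IsCoprime p.1 p.2 ∧ (4 * N) ∣ p.1} =>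
          ‖D p‖ ^ (-κ) := by
        have h := aux_outer z hκ2 (ι := {p : ℤ × ℤ // IsCoprime p.1 p.2 ∧ (4 * N) ∣ p.1})
          (f := Subtype.val) Subtype.val_injective
        exact h
      refine ((hsum1.mul_left (E * y ^ (-σ))).add (hsum2.mul_left (E * (2 ^ σ * Z)))).congr
        fun p => ?_
      have ht := hDpos p
      have e1 : (y / ‖D p‖ ^ 2) ^ (-σ)
          = y ^ (-σ) * ‖D p‖ ^ (2*σ) := by
        rw [Real.div_rpow hy.le (by positivity), ← Real.rpow_natCast (‖D p‖) 2,
          ← Real.rpow_mul (norm_nonneg _),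
          show ((2:ℕ):ℝ) * (-σ) = -(2*σ) by push_cast; ring,
          Real.rpow_neg (norm_nonneg _), div_eq_mul_inv, inv_inv]
      have e2 : ‖D p‖ ^ (-(κ - 2*σ))
          = ‖D p‖ ^ (2*σ) * ‖D p‖ ^ (-κ) := by
        rw [← Real.rpow_add ht]
        congr 1
        ring
      rw [e1, e2]
      ring
  have main : Summable (fun q : {p : ℤ × ℤ // IsCoprime p.1 p.2 ∧ (4 * N) ∣ p.1} × ℤ =>
      ‖D q.1 ^ (-((k:ℂ) + 1/2)) * (w q.1 + ((q.2 - n₀ q.1 : ℤ) : ℂ)) ^ (-s)‖) :=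
    Summable.of_nonneg_of_le (fun q => norm_nonneg _) (fun q => key q.1 q.2) hGsum
  exact (Equiv.summable_iff (aux_shiftEquiv n₀)).mp main
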